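/- (Gadget correctness in the general case of reduction D2.) Let m00, m01, m10, m11 be rational numbers with m11 ≠ 0, and let cu1, cu0, cv1, cv0 be rational numbers. Let P be the path graph on three vertices u, x, v with edges ux and xv. Equip P with the cardinality function: c1(u) = cu1, c0(u) = cu0, c1(v) = cv1, c0(v) = cv0, c0(x) = m11, c1(x) = (m00*m11 - m01*m10)/m11, c0(ux) = m01/m11, c0(xv) = m10/m11. Then for all zeta, eta in {0,1}: c(P, u^zeta, v^eta) = c_zeta(u) * c_eta(v) * m_{zeta eta}, where c_0 and c_1 denote the corresponding vertex weights. -/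

import Mathlib

open Finset

noncomputable section
open scoped Classical

variable {V : Type*}

/-- `S` is an independent set of the simple graph `G`. -/
def Indep (G : SimpleGraph V) (S : Finset V) : Prop :=
  ∀ u ∈ S, ∀ w ∈ S, ¬ G.Adj u w

/-- Independent sets of the induced subgraph `G[W]`. -/
def indepOn [Fintype V] (G : SimpleGraph V) (W : Finset V) : Finset (Finset V) :=
  univ.filter fun S => S ⊆ W ∧ Indep G S

/-- Weight `c_{G[W]}(S)` of an independent set `S` of `G[W]` with respect to the
cardinality function given by vertex weights `c1, c0` and edge weights `ce`. -/
def wt [Fintype V] (G : SimpleGraph V) (c1 c0 : V → ℚ) (ce : Sym2 V → ℚ)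
    (W S : Finset V) : ℚ :=
  (∏ v ∈ S, c1 v) * (∏ v ∈ W \ S, c0 v) *
    ∏ e ∈ G.edgeFinset.filter (fun e => (∀ x ∈ e, x ∈ W) ∧ ∀ x ∈ e, x ∉ S), ce e

/-- `c(G[W])`: the weighted sum over all independent sets of `G[W]`. -/
def tot [Fintype V] (G : SimpleGraph V) (c1 c0 : V → ℚ) (ce : Sym2 V → ℚ)
    (W : Finset V) : ℚ :=
  ∑ S ∈ indepOn G W, wt G c1 c0 ce W S

/-- `c(G[W], v^η)`: the weighted sum over independent sets `S` of `G[W]` with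
`v ∈ S` iff `η = 1`. -/
def totC [Fintype V] (G : SimpleGraph V) (c1 c0 : V → ℚ) (ce : Sym2 V → ℚ)
    (W : Finset V) (v : V) (η : Bool) : ℚ :=
  ∑ S ∈ (indepOn G W).filter (fun S => v ∈ S ↔ η = true), wt G c1 c0 ce W S

/-- `c(G[W], u^ζ, v^η)`. -/
def totC2 [Fintype V] (G : SimpleGraph V) (c1 c0 : V → ℚ) (ce : Sym2 V → ℚ)
    (W : Finset V) (u v : V) (ζ η : Bool) : ℚ :=
  ∑ S ∈ (indepOn G W).filter (fun S => (u ∈ S ↔ ζ = true) ∧ (v ∈ S ↔ η = true)),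
    wt G c1 c0 ce W S


lemma sdiff_inst {α : Type*} {i1 i2 : DecidableEq α} (s t : Finset α) :
    (haveI := i1; s \ t) = (haveI := i2; s \ t) := by
  obtain rfl := Subsingleton.elim i1 i2; rfl

/-- Gadget correctness in the general case of reduction D2:
on the path `u - x - v` (vertices `0, 1, 2` of `Fin 3`) with
`c1(u) = cu1, c0(u) = cu0, c1(v) = cv1, c0(v) = cv0, c0(x) = m11`,
`c1(x) = (m00*m11 - m01*m10)/m11`, `c0(ux) = m01/m11`, `c0(xv) = m10/m11`,
we have `c(P, u^ζ, v^η) = c_ζ(u) * c_η(v) * m_{ζη}` for all `ζ, η ∈ {0,1}`. -/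
theorem totC2_path_gadget (m00 m01 m10 m11 cu1 cu0 cv1 cv0 : ℚ) (hm : m11 ≠ 0)
    (ζ η : Bool) :
    totC2 (SimpleGraph.fromRel (fun a b : Fin 3 => (a = 0 ∧ b = 1) ∨ (a = 1 ∧ b = 2)))
      ![cu1, (m00 * m11 - m01 * m10) / m11, cv1]
      ![cu0, m11, cv0]
      (fun e => if e = s((0 : Fin 3), (1 : Fin 3)) then m01 / m11
        else if e = s((1 : Fin 3), (2 : Fin 3)) then m10 / m11 else 1)
      univ 0 2 ζ η =
    (cond ζ cu1 cu0) * (cond η cv1 cv0) * (cond ζ (cond η m11 m10) (cond η m01 m00)) := by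
  set G := SimpleGraph.fromRel (fun a b : Fin 3 => (a = 0 ∧ b = 1) ∨ (a = 1 ∧ b = 2)) with hG
  have hE : ∀ (inst : Fintype G.edgeSet),
      @SimpleGraph.edgeFinset _ G inst = {s((0:Fin 3),(1:Fin 3)), s((1:Fin 3),(2:Fin 3))} := by
    intro inst
    ext e
    induction e using Sym2.inductionOn with
    | hf a b =>
      simp [hG, SimpleGraph.mem_edgeFinset, SimpleGraph.fromRel_adj, Sym2.eq_iff]
      revert a b; decide
  have hfil : ∀ (ζ η : Bool),
      (indepOn G univ).filter (fun S => ((0:Fin 3) ∈ S ↔ ζ = true) ∧ ((2:Fin 3) ∈ S ↔ η = true)) =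
      cond ζ (cond η {({0,2} : Finset (Fin 3))} {({0} : Finset (Fin 3))})
             (cond η {({2} : Finset (Fin 3))} {(∅ : Finset (Fin 3)), ({1} : Finset (Fin 3))}) := by
    intro ζ η
    ext S
    simp only [Finset.mem_filter, indepOn, Finset.mem_univ, true_and, Finset.subset_univ, Indep, hG, SimpleGraph.fromRel_adj]
    cases ζ <;> cases η <;> (revert S; decide)
  rw [totC2]
  refine (Finset.sum_congr (s₂ := cond ζ (cond η {({0,2} : Finset (Fin 3))} {({0} : Finset (Fin 3))})
      (cond η {({2} : Finset (Fin 3))} {(∅ : Finset (Fin 3)), ({1} : Finset (Fin 3))}))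
      ?_ fun _ _ => rfl).trans ?_
  · convert hfil ζ η using 2
  have h0 : ((univ : Finset (Fin 3)) \ {0, 2}) = {1} := by ext a; fin_cases a <;> simp
  have h1 : ((univ : Finset (Fin 3)) \ {0}) = {1, 2} := by ext a; fin_cases a <;> simp
  have h2 : ((univ : Finset (Fin 3)) \ {2}) = {0, 1} := by ext a; fin_cases a <;> simp
  have h3 : ((univ : Finset (Fin 3)) \ ∅) = {0, 1, 2} := by ext a; fin_cases a <;> simp
  have h4 : ((univ : Finset (Fin 3)) \ {1}) = {0, 2} := by ext a; fin_cases a <;> simp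
  cases ζ <;> cases η <;>
    simp [wt, hE, Finset.filter_insert, Finset.filter_singleton,
      Finset.sum_pair, show (∅ : Finset (Fin 3)) ≠ {1} from (Finset.singleton_ne_empty 1).symm,
      Finset.prod_insert, Finset.prod_pair, Fin.prod_univ_three] <;>
    simp only [sdiff_inst (i2 := instDecidableEqFin 3)] <;>
    simp [h0, h1, h2, h3, h4] <;>
    field_simp <;> ring
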